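/- There exists ε > 0 such that for all k ∈ ℝ^d with |k - e₁| ≤ ε, the function φ_k(x) = k₁x₁² + k'·x' on Ω̄ = closure of B₀(2R) ∩ {x₁ < -R/4} satisfies: inf_{Ω̄} |∇φ_k| ≥ α and the subellipticity condition (Hess φ_k(x))∇φ_k(x)·∇φ_k(x) + (Hess φ_k(x))ξ·ξ ≥ β|∇φ_k(x)|² for all x ∈ Ω̄ and ξ ⊥ ∇φ_k(x) with |ξ| = |∇φ_k(x)|, where α, β > 0 are independent of k. -/

import Mathlib

open EuclideanSpace in
private lemma norm_sq_single_add_orth {d : ℕ} (i : Fin d) (a : ℝ)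
    (w : EuclideanSpace ℝ (Fin d)) (hw : w i = 0) :
    ‖EuclideanSpace.single i a + w‖ ^ 2 = a ^ 2 + ‖w‖ ^ 2 := by
  have h : (inner ℝ (EuclideanSpace.single i a) w : ℝ) = 0 := by
    rw [EuclideanSpace.inner_single_left]; simp [hw]
  rw [norm_add_sq_real, h, EuclideanSpace.norm_single]
  simp [sq_abs]

private lemma key_fderiv {d : ℕ} (i0 : Fin d) (c : ℝ) (k' : EuclideanSpace ℝ (Fin d))
    (x : EuclideanSpace ℝ (Fin d)) :
    HasFDerivAt (fun y : EuclideanSpace ℝ (Fin d) => c * (y i0) ^ 2 + (inner ℝ k' y : ℝ))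
      ((((2*c) • (EuclideanSpace.proj i0 : EuclideanSpace ℝ (Fin d) →L[ℝ] ℝ)).smulRight
          (EuclideanSpace.proj i0 : EuclideanSpace ℝ (Fin d) →L[ℝ] ℝ)) x
        + innerSL ℝ k') x := by
  set π : EuclideanSpace ℝ (Fin d) →L[ℝ] ℝ := EuclideanSpace.proj i0 with hπ
  have h1 : HasFDerivAt (fun y : EuclideanSpace ℝ (Fin d) => π y) π x := π.hasFDerivAt
  have h2 : HasFDerivAt (fun y : EuclideanSpace ℝ (Fin d) => π y * π y)
      (π x • π + π x • π) x := h1.mul h1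
  have h3 := (h2.const_mul c).add (innerSL ℝ k').hasFDerivAt
  have heq : (fun y : EuclideanSpace ℝ (Fin d) => c * (y i0) ^ 2 + (inner ℝ k' y : ℝ))
      = fun y => c * (π y * π y) + innerSL ℝ k' y := by
    funext y; simp [hπ, sq]
  rw [heq]
  refine h3.congr_fderiv ?_
  ext v
  simp [hπ]
  ring

private lemma grad_eq {d : ℕ} (i0 : Fin d) (c : ℝ) (k' : EuclideanSpace ℝ (Fin d))
    (x : EuclideanSpace ℝ (Fin d)) :
    HasGradientAt (fun y : EuclideanSpace ℝ (Fin d) => c * (y i0) ^ 2 + (inner ℝ k' y : ℝ))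
      (EuclideanSpace.single i0 (2 * c * x i0) + k') x := by
  rw [hasGradientAt_iff_hasFDerivAt]
  refine (key_fderiv i0 c k' x).congr_fderiv ?_
  ext v
  simp [InnerProductSpace.toDual_apply_apply, inner_add_left, EuclideanSpace.inner_single_left]

private lemma second_deriv {d : ℕ} (i0 : Fin d) (c : ℝ) (k' : EuclideanSpace ℝ (Fin d))
    (x u v : EuclideanSpace ℝ (Fin d)) :
    iteratedFDeriv ℝ 2 (fun y : EuclideanSpace ℝ (Fin d) => c * (y i0) ^ 2 + (inner ℝ k' y : ℝ))
      x ![u, v] = 2 * c * u i0 * v i0 := by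
  set π : EuclideanSpace ℝ (Fin d) →L[ℝ] ℝ := EuclideanSpace.proj i0 with hπ
  set A : EuclideanSpace ℝ (Fin d) →L[ℝ] EuclideanSpace ℝ (Fin d) →L[ℝ] ℝ :=
    ((2*c) • π).smulRight π with hA
  have hf : (fderiv ℝ (fun y : EuclideanSpace ℝ (Fin d) => c * (y i0) ^ 2 + (inner ℝ k' y : ℝ)))
      = fun y => A y + innerSL ℝ k' := by
    funext y; exact (key_fderiv i0 c k' y).fderiv
  rw [iteratedFDeriv_two_apply, hf]
  have h2 : HasFDerivAt (fun y : EuclideanSpace ℝ (Fin d) => A y + innerSL ℝ k') A x :=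
    A.hasFDerivAt.add_const _
  rw [h2.fderiv]
  simp [hA, hπ]

set_option maxHeartbeats 1000000 in
/-- Stability of the Carleman subellipticity conditions for the family of weights
`φ_k(x) = k₁ x₁² + k'·x'`: there is `ε > 0` and constants `α, β > 0` independent of
`k` such that for all `k` with `|k - e₁| ≤ ε`, `inf |∇φ_k| ≥ α` on the closure of
`B₀(2R) ∩ {x₁ < -R/4}` and the subellipticity condition holds with constant `β`. -/
theorem family_weights_subelliptic (d : ℕ) (hd : 3 ≤ d) (R : ℝ) (hR : 0 < R)
    (φ : EuclideanSpace ℝ (Fin d) → EuclideanSpace ℝ (Fin d) → ℝ)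
    (hφ : ∀ k x, φ k x = k ⟨0, by omega⟩ * (x ⟨0, by omega⟩) ^ 2 +
      ∑ i : Fin d, if i = ⟨0, by omega⟩ then 0 else k i * x i) :
    ∃ ε > (0:ℝ), ∃ α > (0:ℝ), ∃ β > (0:ℝ),
      ∀ k : EuclideanSpace ℝ (Fin d),
        ‖k - EuclideanSpace.single (⟨0, by omega⟩ : Fin d) (1:ℝ)‖ ≤ ε →
        ∀ x ∈ closure (Metric.ball (0 : EuclideanSpace ℝ (Fin d)) (2*R) ∩
            {x : EuclideanSpace ℝ (Fin d) | x ⟨0, by omega⟩ < -R/4}),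
          α ≤ ‖gradient (φ k) x‖ ∧
          ∀ ξ : EuclideanSpace ℝ (Fin d), ‖ξ‖ = ‖gradient (φ k) x‖ →
            inner ℝ (gradient (φ k) x) ξ = (0:ℝ) →
            β * ‖gradient (φ k) x‖ ^ 2 ≤
              iteratedFDeriv ℝ 2 (φ k) x ![gradient (φ k) x, gradient (φ k) x] +
                iteratedFDeriv ℝ 2 (φ k) x ![ξ, ξ] := by
  have hd0 : 0 < d := by omega
  set i0 : Fin d := ⟨0, by omega⟩ with hi0
  refine ⟨min (1/2) (R/4), by positivity, R/4, by positivity, 1/4, by norm_num, ?_⟩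
  intro k hk x hx
  set c : ℝ := k i0 with hc
  set k' : EuclideanSpace ℝ (Fin d) := k - EuclideanSpace.single i0 c with hk'
  have hk'0 : k' i0 = 0 := by simp [hk', hc]
  -- rewrite φ k
  have hφk : φ k = fun y : EuclideanSpace ℝ (Fin d) => c * (y i0) ^ 2 + (inner ℝ k' y : ℝ) := by
    funext y
    rw [hφ]
    congr 1
    rw [PiLp.inner_apply]
    simp only [RCLike.inner_apply, conj_trivial]
    apply Finset.sum_congr rfl
    intro i _
    by_cases h : i = i0
    · subst h; simp [hk', hc, EuclideanSpace.single_apply]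
    · simp [h, hk', hc, EuclideanSpace.single_apply, mul_comm]
  -- decomposition of k - e₁
  have hdecomp : k - EuclideanSpace.single i0 (1:ℝ)
      = EuclideanSpace.single i0 (c - 1) + k' := by
    ext i
    by_cases h : i = i0 <;> simp [h, hk', hc, EuclideanSpace.single_apply]
  have hknorm : ‖k - EuclideanSpace.single i0 (1:ℝ)‖ ^ 2 = (c-1)^2 + ‖k'‖^2 := by
    rw [hdecomp]; exact norm_sq_single_add_orth i0 (c-1) k' hk'0
  have hknn : ‖k - EuclideanSpace.single i0 (1:ℝ)‖ ≥ 0 := norm_nonneg _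
  have hε1 : ‖k - EuclideanSpace.single i0 (1:ℝ)‖ ≤ 1/2 := le_trans hk (min_le_left _ _)
  have hε2 : ‖k - EuclideanSpace.single i0 (1:ℝ)‖ ≤ R/4 := le_trans hk (min_le_right _ _)
  have hc1 : (c-1)^2 ≤ (1/2)^2 := by nlinarith [norm_nonneg k', sq_nonneg (c-1)]
  have hchalf : 1/2 ≤ c := by nlinarith [sq_nonneg (c - 1/2)]
  have hk'le : ‖k'‖ ≤ R/4 := by nlinarith [norm_nonneg k', sq_nonneg (c-1)]
  -- x coordinate bound
  have hx0 : x i0 ≤ -R/4 := by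
    have hcl : closure (Metric.ball (0 : EuclideanSpace ℝ (Fin d)) (2*R) ∩
        {x : EuclideanSpace ℝ (Fin d) | x i0 < -R/4})
        ⊆ {x : EuclideanSpace ℝ (Fin d) | x i0 ≤ -R/4} := by
      apply closure_minimal
      · intro y hy
        have h2 := hy.2
        simp only [Set.mem_setOf_eq] at h2
        exact h2.le
      · exact isClosed_le (EuclideanSpace.proj i0).continuous continuous_const
    exact hcl hx
  set a : ℝ := 2 * c * x i0 with ha
  have haneg : a ≤ -R/4 := by nlinarith
  have ha2 : (R/4)^2 ≤ a^2 := by nlinarith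
  -- gradient
  set g : EuclideanSpace ℝ (Fin d) := EuclideanSpace.single i0 a + k' with hg
  have hgrad : gradient (φ k) x = g := by
    rw [hφk]
    exact (grad_eq i0 c k' x).gradient
  have hgnorm : ‖g‖^2 = a^2 + ‖k'‖^2 := norm_sq_single_add_orth i0 a k' hk'0
  have hgi0 : g i0 = a := by simp [hg, hk'0, EuclideanSpace.single_apply]
  constructor
  · -- lower bound on gradient norm
    rw [hgrad]
    nlinarith [norm_nonneg g, sq_nonneg ‖k'‖, hR.le]
  · intro ξ _ _
    rw [hgrad, hφk, second_deriv i0 c k' x g g, second_deriv i0 c k' x ξ ξ, hgi0]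
    nlinarith [sq_nonneg (ξ i0), norm_nonneg k', norm_nonneg g]
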